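/- Let K be a field, 0 < d < m integers, A a d×m matrix over K of rank d, and B an (m−d)×m matrix over K of rank m−d such that A·Bᵀ = 0. Then A is semistable if and only if B is semistable; that is, one has ( for every subset I ⊆ {1,…,m}: d·|I| ≤ m·rk(A_I) ) if and only if ( for every subset I ⊆ {1,…,m}: (m−d)·|I| ≤ m·rk(B_I) ). -/
import Mathlib

open Matrix

/-- The submatrix of `A` formed by the columns indexed by the subset `I`. -/
noncomputable def colSubmatrix {K : Type*} [Field K] {d m : ℕ}
    (A : Matrix (Fin d) (Fin m) K) (I : Finset (Fin m)) :
    Matrix (Fin d) {x : Fin m // x ∈ I} K :=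
  A.submatrix id (fun j => (j : Fin m))

noncomputable def inclMatrix (K : Type*) [Field K] {m : ℕ} (I : Finset (Fin m)) :
    Matrix (Fin m) {x : Fin m // x ∈ I} K :=
  Matrix.of fun i j => if i = (j : Fin m) then 1 else 0

lemma inclMatrix_mulVec {K : Type*} [Field K] {m : ℕ} (I : Finset (Fin m))
    (v : {x : Fin m // x ∈ I} → K) (i : Fin m) :
    (inclMatrix K I).mulVec v i = if h : i ∈ I then v ⟨i, h⟩ else 0 := by
  rw [Matrix.mulVec, dotProduct]
  by_cases h : i ∈ I
  · rw [dif_pos h, Fintype.sum_eq_single (⟨i, h⟩ : {x : Fin m // x ∈ I})]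
    · simp [inclMatrix]
    · intro j hj
      have : i ≠ (j : Fin m) := fun hij => hj (Subtype.ext (hij.symm : (j : Fin m) = i))
      simp [inclMatrix, this]
  · rw [dif_neg h]
    apply Finset.sum_eq_zero
    intro j _
    have : i ≠ (j : Fin m) := fun hij => h (hij ▸ j.2)
    simp [inclMatrix, this]

lemma colSubmatrix_eq_mul {K : Type*} [Field K] {d m : ℕ}
    (A : Matrix (Fin d) (Fin m) K) (I : Finset (Fin m)) :
    colSubmatrix A I = A * inclMatrix K I := by
  ext i j
  rw [Matrix.mul_apply]
  simp only [inclMatrix, Matrix.of_apply, mul_ite, mul_one, mul_zero]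
  rw [Finset.sum_ite_eq' Finset.univ ((j : Fin m)) (fun k => A i k)]
  simp [colSubmatrix]

lemma inclMatrix_mulVecLin_injective {K : Type*} [Field K] {m : ℕ} (I : Finset (Fin m)) :
    Function.Injective (inclMatrix K I).mulVecLin := by
  intro v w h
  funext j
  have h1 := congrFun h (j : Fin m)
  simp only [mulVecLin_apply, inclMatrix_mulVec, dif_pos j.2] at h1
  simpa using h1

lemma transpose_inclMatrix_mulVec {K : Type*} [Field K] {m : ℕ} (I : Finset (Fin m))
    (x : Fin m → K) (j : {x : Fin m // x ∈ I}) :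
    ((inclMatrix K I)ᵀ.mulVec x) j = x (j : Fin m) := by
  rw [Matrix.mulVec, dotProduct]
  simp only [Matrix.transpose_apply, inclMatrix, Matrix.of_apply, ite_mul, one_mul, zero_mul]
  rw [Finset.sum_ite_eq' Finset.univ ((j : Fin m)) (fun k => x k)]
  simp

lemma range_inclMatrix {K : Type*} [Field K] {m : ℕ} (I : Finset (Fin m)) :
    LinearMap.range (inclMatrix K I).mulVecLin
      = LinearMap.ker ((inclMatrix K Iᶜ)ᵀ).mulVecLin := by
  apply le_antisymm
  · rintro _ ⟨v, rfl⟩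
    rw [LinearMap.mem_ker]
    funext j
    have hj : (j : Fin m) ∉ I := Finset.mem_compl.mp j.2
    rw [Matrix.mulVecLin_apply, transpose_inclMatrix_mulVec, Matrix.mulVecLin_apply,
      inclMatrix_mulVec, dif_neg hj]
    rfl
  · intro x hx
    refine ⟨fun j => x (j : Fin m), ?_⟩
    funext i
    rw [Matrix.mulVecLin_apply, inclMatrix_mulVec]
    by_cases h : i ∈ I
    · rw [dif_pos h]
    · rw [dif_neg h]
      rw [LinearMap.mem_ker] at hx
      have h2 := congrFun hx (⟨i, Finset.mem_compl.2 h⟩ : {x : Fin m // x ∈ Iᶜ})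
      rw [Matrix.mulVecLin_apply, transpose_inclMatrix_mulVec] at h2
      exact h2.symm

lemma key_rank {K : Type*} [Field K] {d e m : ℕ} (hdem : d + e = m)
    (A : Matrix (Fin d) (Fin m) K) (B : Matrix (Fin e) (Fin m) K)
    (hA : A.rank = d) (hB : B.rank = e) (hAB : A * Bᵀ = 0) (I : Finset (Fin m)) :
    (colSubmatrix A I).rank + e = I.card + (colSubmatrix B Iᶜ).rank := by
  classical
  set f := A.mulVecLin with hf
  set g := Bᵀ.mulVecLin with hg
  set p := (inclMatrix K I).mulVecLin with hp
  set t := ((colSubmatrix B Iᶜ)ᵀ).mulVecLin with ht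
  have hm : Module.finrank K (Fin m → K) = m := by simp
  have he : Module.finrank K (Fin e → K) = e := by simp
  have hcard : Module.finrank K ({x : Fin m // x ∈ I} → K) = I.card := by
    rw [Module.finrank_pi, Fintype.card_coe]
  -- step 1 : rank-nullity for (colSubmatrix A I)
  have hcomp : (colSubmatrix A I).mulVecLin = f.comp p := by
    rw [colSubmatrix_eq_mul, Matrix.mulVecLin_mul]
  have h1 : (colSubmatrix A I).rank + Module.finrank K (LinearMap.ker (f.comp p)) = I.card := by
    rw [Matrix.rank, hcomp, ← hcard]
    exact LinearMap.finrank_range_add_finrank_ker (f.comp p)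
  -- step 2 : ker f = range g
  have hrg : Module.finrank K (LinearMap.range g) = e := by
    rw [hg, ← Matrix.rank, Matrix.rank_transpose, hB]
  have hkf : Module.finrank K (LinearMap.ker f) = e := by
    have := LinearMap.finrank_range_add_finrank_ker f
    rw [hm] at this
    have hrf : Module.finrank K (LinearMap.range f) = d := hA
    omega
  have hle : LinearMap.range g ≤ LinearMap.ker f := by
    rintro _ ⟨w, rfl⟩
    rw [LinearMap.mem_ker, hf, hg, Matrix.mulVecLin_apply, Matrix.mulVecLin_apply,
      Matrix.mulVec_mulVec, hAB]
    simp
  have hkerf : LinearMap.ker f = LinearMap.range g :=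
    (Submodule.eq_of_le_of_finrank_eq hle (by rw [hrg, hkf])).symm
  -- step 3 : g injective
  have hginj : Function.Injective g := by
    rw [← LinearMap.ker_eq_bot]
    have := LinearMap.finrank_range_add_finrank_ker g
    rw [he, hrg] at this
    have h0 : Module.finrank K (LinearMap.ker g) = 0 := by omega
    exact Submodule.finrank_eq_zero.mp h0
  have hpinj : Function.Injective p := inclMatrix_mulVecLin_injective I
  -- step 4 : ker (f ∘ p) has the same dimension as ker t
  have hqt : ((inclMatrix K Iᶜ)ᵀ).mulVecLin.comp g = t := by
    rw [hg, ht, ← Matrix.mulVecLin_mul]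
    congr 1
    rw [colSubmatrix_eq_mul, Matrix.transpose_mul]
  have h4 : Module.finrank K (LinearMap.ker (f.comp p)) = Module.finrank K (LinearMap.ker t) := by
    have e1 : Module.finrank K (LinearMap.ker (f.comp p))
        = Module.finrank K (Submodule.map p (LinearMap.ker (f.comp p))) :=
      (LinearEquiv.finrank_eq (Submodule.equivMapOfInjective p hpinj _))
    have e2 : Submodule.map p (LinearMap.ker (f.comp p))
        = LinearMap.range p ⊓ LinearMap.ker f := by
      rw [LinearMap.ker_comp, Submodule.map_comap_eq]
    have e3 : LinearMap.range p ⊓ LinearMap.ker f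
        = Submodule.map g (LinearMap.ker t) := by
      rw [hkerf, hp, range_inclMatrix, inf_comm, ← Submodule.map_comap_eq,
        ← LinearMap.ker_comp, hqt]
    have e4 : Module.finrank K (Submodule.map g (LinearMap.ker t))
        = Module.finrank K (LinearMap.ker t) :=
      (LinearEquiv.finrank_eq (Submodule.equivMapOfInjective g hginj _)).symm
    rw [e1, e2, e3, e4]
  -- step 5 : rank-nullity for t
  have h5 : (colSubmatrix B Iᶜ).rank + Module.finrank K (LinearMap.ker t) = e := by
    have := LinearMap.finrank_range_add_finrank_ker t
    rw [he] at this
    rw [← Matrix.rank_transpose, Matrix.rank, ← ht]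
    exact this
  omega

lemma arith_step {d e m c c' rA rB : ℕ} (hdem : d + e = m) (hc : c + c' = m)
    (k : rB + d = c + rA) (h : d * c' ≤ m * rA) : e * c ≤ m * rB := by
  have h1 : m * rB + m * d = m * c + m * rA := by
    rw [← Nat.mul_add, k, Nat.mul_add]
  nlinarith [Nat.mul_le_mul_left m h]

/-- Let `0 < d < m`, let `A` be a `d×m` matrix of rank `d` and `B` an `(m−d)×m` matrix
of rank `m−d` over a field, with `A·Bᵀ = 0`. Then `A` is semistable
(`d·|I| ≤ m·rk(A_I)` for all `I`) iff `B` is semistable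
(`(m−d)·|I| ≤ m·rk(B_I)` for all `I`). -/
theorem semistable_iff_semistable_of_orthogonal {K : Type*} [Field K] {d m : ℕ}
    (hd : 0 < d) (hdm : d < m)
    (A : Matrix (Fin d) (Fin m) K) (B : Matrix (Fin (m - d)) (Fin m) K)
    (hA : A.rank = d) (hB : B.rank = m - d) (hAB : A * Bᵀ = 0) :
    (∀ I : Finset (Fin m), d * I.card ≤ m * (colSubmatrix A I).rank)
    ↔ (∀ I : Finset (Fin m), (m - d) * I.card ≤ m * (colSubmatrix B I).rank) := by
  have hdem : d + (m - d) = m := by omega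
  have hBA : B * Aᵀ = 0 := by
    have := congrArg Matrix.transpose hAB
    rwa [Matrix.transpose_mul, Matrix.transpose_transpose, Matrix.transpose_zero] at this
  have key1 := key_rank hdem A B hA hB hAB
  have key2 := key_rank (by omega : (m - d) + d = m) B A hB hA hBA
  have hc : ∀ J : Finset (Fin m), J.card + Jᶜ.card = m := by
    intro J
    rw [Finset.card_add_card_compl, Fintype.card_fin]
  constructor
  · intro h J
    exact arith_step hdem (hc J) (key2 J) (h Jᶜ)
  · intro h I
    exact arith_step (by omega : (m - d) + d = m) (hc I) (key1 I) (h Iᶜ)
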